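/- Let (P*, λ*, μ*) be the KKT triple for the ED problem. If b* ≥ 0 is an efficient bid, then λ* ≤ b*_i ≤ C_i'(P*_i) for every i; in particular b*_i = λ* for every i with P*_i > 0. -/
import Mathlib


open Finset

noncomputable section

/-- Feasible production profiles for the dispatch problems:
power balance `1ᵀP = 1ᵀP_d` and componentwise nonnegativity. -/
def Feasible {n : ℕ} (Pd P : Fin n → ℝ) : Prop :=
  (∑ i, P i = ∑ i, Pd i) ∧ ∀ i, 0 ≤ P i

/-- `P` is an optimizer of the ISO problem for bids `b`:
it minimizes `bᵀP` over the feasible set. -/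
def IsISOOpt {n : ℕ} (Pd b P : Fin n → ℝ) : Prop :=
  Feasible Pd P ∧ ∀ Q, Feasible Pd Q → ∑ i, b i * P i ≤ ∑ i, b i * Q i

/-- `P` is a minimizer of the economic dispatch (ED) problem. -/
def IsEDOpt {n : ℕ} (C : Fin n → ℝ → ℝ) (Pd P : Fin n → ℝ) : Prop :=
  Feasible Pd P ∧ ∀ Q, Feasible Pd Q → ∑ i, C i (P i) ≤ ∑ i, C i (Q i)

/-- `(P, lam, mu)` is a KKT triple for the ED problem, with `C' i` the marginal
cost of generator `i`. -/
def IsKKT {n : ℕ} (C' : Fin n → ℝ → ℝ) (Pd P : Fin n → ℝ) (lam : ℝ)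
    (mu : Fin n → ℝ) : Prop :=
  (∀ i, C' i (P i) = lam + mu i) ∧ (∑ i, P i = ∑ i, Pd i) ∧
    (∀ i, 0 ≤ P i) ∧ (∀ i, 0 ≤ mu i) ∧ (∑ i, P i * mu i = 0)

/-- Payoff of a generator with cost `Ci` bidding `bi` and producing `Pi`. -/
def Payoff (Ci : ℝ → ℝ) (bi Pi : ℝ) : ℝ := Pi * bi - Ci Pi

/-- `bstar` is a Nash equilibrium of the inelastic electricity market game. -/
def IsNash {n : ℕ} (C : Fin n → ℝ → ℝ) (Pd bstar : Fin n → ℝ) : Prop :=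
  (∀ i, 0 ≤ bstar i) ∧
  ∃ P0, IsISOOpt Pd bstar P0 ∧
    ∀ i (bi : ℝ), 0 ≤ bi → bi ≠ bstar i →
      ∀ P, IsISOOpt Pd (Function.update bstar i bi) P →
        Payoff (C i) bi (P i) ≤ Payoff (C i) (bstar i) (P0 i)

/-- `bstar` is an efficient bid: the optimizer of the ED problem is also an
optimizer of the ISO problem for bids `bstar`, and each `Pstar i` maximizes
the profit `P ↦ P * bstar i - C i P` over `P ≥ 0`. -/
def IsEfficientBid {n : ℕ} (C : Fin n → ℝ → ℝ) (Pd bstar : Fin n → ℝ) : Prop :=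
  (∀ i, 0 ≤ bstar i) ∧
  ∀ Pstar, IsEDOpt C Pd Pstar →
    IsISOOpt Pd bstar Pstar ∧
      ∀ i, ∀ P, 0 ≤ P → Payoff (C i) (bstar i) P ≤ Payoff (C i) (bstar i) (Pstar i)

/-- Standing assumptions on a generator cost function: continuously
differentiable with derivative `Cf'`, strongly convex on `[0, ∞)`, and
nonnegative marginal cost at zero. -/
def CostAssumptions (Cf Cf' : ℝ → ℝ) : Prop :=
  (∀ x, HasDerivAt Cf (Cf' x) x) ∧ Continuous Cf' ∧
    (∃ m : ℝ, 0 < m ∧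
      ∀ x y, 0 ≤ x → 0 ≤ y → (Cf' x - Cf' y) * (x - y) ≥ m * (x - y) ^ 2) ∧
    0 ≤ Cf' 0

/-- `P` is the unique maximizer of the profit `Q ↦ β * Q - Cf Q` over `Q ≥ 0`. -/
def IsUniqueArgmaxProfit (Cf : ℝ → ℝ) (β P : ℝ) : Prop :=
  0 ≤ P ∧ (∀ Q, 0 ≤ Q → β * Q - Cf Q ≤ β * P - Cf P) ∧
    ∀ Q, 0 ≤ Q → (∀ R, 0 ≤ R → β * R - Cf R ≤ β * Q - Cf Q) → Q = P


lemma my_mvt (Cf Cf' : ℝ → ℝ) (hd : ∀ x, HasDerivAt Cf (Cf' x) x)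
    {x y : ℝ} (hxy : x < y) :
    ∃ c ∈ Set.Ioo x y, Cf y - Cf x = Cf' c * (y - x) := by
  obtain ⟨c, hc, hceq⟩ := exists_hasDerivAt_eq_slope Cf Cf' hxy
    (fun z _ => (hd z).continuousAt.continuousWithinAt)
    (fun z _ => hd z)
  refine ⟨c, hc, ?_⟩
  rw [hceq, div_mul_cancel₀]
  linarith

lemma my_mono (Cf' : ℝ → ℝ) {m : ℝ} (hm : 0 < m)
    (hsc : ∀ x y, 0 ≤ x → 0 ≤ y → (Cf' x - Cf' y) * (x - y) ≥ m * (x - y) ^ 2)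
    {x y : ℝ} (hx : 0 ≤ x) (hxy : x ≤ y) : Cf' x ≤ Cf' y := by
  have h := hsc x y hx (hx.trans hxy)
  by_contra hcon
  push_neg at hcon
  have h2 : (Cf' x - Cf' y) * (x - y) ≤ 0 :=
    mul_nonpos_of_nonneg_of_nonpos (by linarith) (by linarith)
  have h3 : (x - y) ^ 2 = 0 := by nlinarith [sq_nonneg (x - y)]
  have h4 : x = y := by
    have := pow_eq_zero_iff (n := 2) (by norm_num) |>.mp h3
    linarith
  rw [h4] at hcon
  exact absurd rfl hcon.ne

lemma my_grad_ineq (Cf Cf' : ℝ → ℝ) (hd : ∀ x, HasDerivAt Cf (Cf' x) x)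
    {m : ℝ} (hm : 0 < m)
    (hsc : ∀ x y, 0 ≤ x → 0 ≤ y → (Cf' x - Cf' y) * (x - y) ≥ m * (x - y) ^ 2)
    {x y : ℝ} (hx : 0 ≤ x) (hy : 0 ≤ y) : Cf' x * (y - x) ≤ Cf y - Cf x := by
  rcases lt_trichotomy x y with h | h | h
  · obtain ⟨c, hc, hceq⟩ := my_mvt Cf Cf' hd h
    have hmono := my_mono Cf' hm hsc hx hc.1.le
    nlinarith [hc.1, hc.2]
  · simp [h]
  · obtain ⟨c, hc, hceq⟩ := my_mvt Cf Cf' hd h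
    have hmono := my_mono Cf' hm hsc (hy.trans hc.1.le) hc.2.le
    nlinarith [hc.1, hc.2]

lemma my_profit_upper (Cf Cf' : ℝ → ℝ) (hd : ∀ x, HasDerivAt Cf (Cf' x) x)
    (hcont : Continuous Cf') {b p : ℝ} (hp : 0 ≤ p)
    (hmax : ∀ Q, 0 ≤ Q → Q * b - Cf Q ≤ p * b - Cf p) : b ≤ Cf' p := by
  by_contra hcon
  push_neg at hcon
  have hev : ∀ᶠ x in nhds p, Cf' x < b :=
    hcont.continuousAt.eventually_lt continuousAt_const hcon
  rw [Metric.eventually_nhds_iff] at hev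
  obtain ⟨ε, hε, hball⟩ := hev
  set q := p + ε / 2 with hq
  have hpq : p < q := by simp [hq]; linarith
  obtain ⟨c, hc, hceq⟩ := my_mvt Cf Cf' hd hpq
  have hcb : Cf' c < b := by
    apply hball
    rw [Real.dist_eq, abs_lt]
    constructor <;> [linarith [hc.1]; simp [hq] at hc ⊢] <;> linarith [hc.2]
  have := hmax q (by linarith)
  nlinarith [hc.1, hc.2]

lemma my_profit_lower (Cf Cf' : ℝ → ℝ) (hd : ∀ x, HasDerivAt Cf (Cf' x) x)
    (hcont : Continuous Cf') {b p : ℝ} (hp : 0 < p)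
    (hmax : ∀ Q, 0 ≤ Q → Q * b - Cf Q ≤ p * b - Cf p) : Cf' p ≤ b := by
  by_contra hcon
  push_neg at hcon
  have hev : ∀ᶠ x in nhds p, b < Cf' x :=
    continuousAt_const.eventually_lt hcont.continuousAt hcon
  rw [Metric.eventually_nhds_iff] at hev
  obtain ⟨ε, hε, hball⟩ := hev
  set q := p - min (ε / 2) (p / 2) with hq
  have hmin : 0 < min (ε / 2) (p / 2) := by positivity
  have hq0 : 0 ≤ q := by
    have h1 := min_le_right (ε / 2) (p / 2); rw [hq]; linarith
  have hpq : q < p := by rw [hq]; linarith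
  obtain ⟨c, hc, hceq⟩ := my_mvt Cf Cf' hd hpq
  have hcb : b < Cf' c := by
    apply hball
    rw [Real.dist_eq, abs_lt]
    have h1 := min_le_left (ε / 2) (p / 2)
    rw [hq] at hc
    constructor <;> [linarith [hc.1]; linarith [hc.2]]
  have := hmax q hq0
  nlinarith [hc.1, hc.2]


lemma my_kkt_edopt {n : ℕ} (C C' : Fin n → ℝ → ℝ)
    (hC : ∀ i, CostAssumptions (C i) (C' i)) (Pd : Fin n → ℝ)
    (Pstar : Fin n → ℝ) (lam : ℝ) (mu : Fin n → ℝ)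
    (hKKT : IsKKT C' Pd Pstar lam mu) : IsEDOpt C Pd Pstar := by
  obtain ⟨hstat, hbal, hPnn, hmunn, hcomp⟩ := hKKT
  refine ⟨⟨hbal, hPnn⟩, fun Q hQ => ?_⟩
  have key : ∀ i, C' i (Pstar i) * (Q i - Pstar i) ≤ C i (Q i) - C i (Pstar i) := by
    intro i
    obtain ⟨hd, hcont, ⟨m, hm, hsc⟩, h0⟩ := hC i
    exact my_grad_ineq (C i) (C' i) hd hm hsc (hPnn i) (hQ.2 i)
  have h1 : ∑ i, C' i (Pstar i) * (Q i - Pstar i) ≤ ∑ i, (C i (Q i) - C i (Pstar i)) :=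
    Finset.sum_le_sum fun i _ => key i
  have h2 : ∑ i, C' i (Pstar i) * (Q i - Pstar i)
      = lam * (∑ i, Q i - ∑ i, Pstar i) + ∑ i, mu i * Q i - ∑ i, Pstar i * mu i := by
    have hterm : ∀ i, C' i (Pstar i) * (Q i - Pstar i)
        = lam * (Q i - Pstar i) + mu i * Q i - Pstar i * mu i := by
      intro i; rw [hstat i]; ring
    simp only [hterm]
    rw [Finset.sum_sub_distrib, Finset.sum_add_distrib, ← Finset.mul_sum,
      Finset.sum_sub_distrib]
  have h3 : 0 ≤ ∑ i, mu i * Q i :=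
    Finset.sum_nonneg fun i _ => mul_nonneg (hmunn i) (hQ.2 i)
  rw [Finset.sum_sub_distrib] at h1
  rw [hQ.1, hbal] at h2
  simp [hcomp] at h2
  linarith

/-- Let `(Pstar, lam, mu)` be the KKT triple for the ED
problem. If `bstar ≥ 0` is an efficient bid, then `lam ≤ bstar i ≤ C' i (Pstar i)`
for every `i`; in particular `bstar i = lam` for every `i` with `Pstar i > 0`. -/
theorem efficient_bid_interval {n : ℕ} (hn : 1 ≤ n)
    (C C' : Fin n → ℝ → ℝ) (hC : ∀ i, CostAssumptions (C i) (C' i))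
    (Pd : Fin n → ℝ) (hPd : ∀ i, 0 ≤ Pd i) (hPdpos : 0 < ∑ i, Pd i)
    (Pstar : Fin n → ℝ) (lam : ℝ) (mu : Fin n → ℝ)
    (hKKT : IsKKT C' Pd Pstar lam mu)
    (bstar : Fin n → ℝ) (hbstar : ∀ i, 0 ≤ bstar i)
    (hEff : IsEfficientBid C Pd bstar) :
    ∀ i, (lam ≤ bstar i ∧ bstar i ≤ C' i (Pstar i)) ∧
      (0 < Pstar i → bstar i = lam) := by
  have hED := my_kkt_edopt C C' hC Pd Pstar lam mu hKKT
  obtain ⟨hstat, hbal, hPnn, hmunn, hcomp⟩ := hKKT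
  obtain ⟨hISO, hprofit⟩ := hEff.2 Pstar hED
  have hcompi : ∀ i, Pstar i * mu i = 0 := fun i =>
    (Finset.sum_eq_zero_iff_of_nonneg
      (fun j _ => mul_nonneg (hPnn j) (hmunn j))).mp hcomp i (Finset.mem_univ i)
  have hmax : ∀ i, ∀ Q, 0 ≤ Q →
      Q * bstar i - C i Q ≤ Pstar i * bstar i - C i (Pstar i) := by
    intro i Q hQ
    simpa [Payoff] using hprofit i Q hQ
  have hub : ∀ i, bstar i ≤ C' i (Pstar i) := by
    intro i
    obtain ⟨hd, hcont, ⟨m, hm, hsc⟩, h0⟩ := hC i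
    exact my_profit_upper (C i) (C' i) hd hcont (hPnn i) (hmax i)
  have heq : ∀ i, 0 < Pstar i → bstar i = lam := by
    intro i hpos
    obtain ⟨hd, hcont, ⟨m, hm, hsc⟩, h0⟩ := hC i
    have hlb := my_profit_lower (C i) (C' i) hd hcont hpos (hmax i)
    have hmu0 : mu i = 0 := by
      rcases mul_eq_zero.mp (hcompi i) with h | h
      · exact absurd h (ne_of_gt hpos)
      · exact h
    have hCl : C' i (Pstar i) = lam := by rw [hstat i, hmu0]; ring
    linarith [hub i]
  have hPsum : 0 < ∑ i, Pstar i := hbal ▸ hPdpos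
  have hex : ∃ j, 0 < Pstar j := by
    by_contra h
    push_neg at h
    have : ∑ i, Pstar i ≤ 0 := Finset.sum_nonpos fun i _ => h i
    linarith
  obtain ⟨j, hj⟩ := hex
  have hlbb : ∀ i, lam ≤ bstar i := by
    intro i
    by_cases hi : 0 < Pstar i
    · exact (heq i hi).ge
    have hi0 : Pstar i = 0 := le_antisymm (not_lt.mp hi) (hPnn i)
    have hij : i ≠ j := by rintro rfl; exact hi hj
    set Q : Fin n → ℝ := fun k =>
      Pstar k + (if k = i then Pstar j else 0) - (if k = j then Pstar j else 0) with hQdef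
    have hQfeas : Feasible Pd Q := by
      constructor
      · simp only [hQdef, Finset.sum_sub_distrib, Finset.sum_add_distrib,
          Finset.sum_ite_eq', Finset.mem_univ, if_pos, hbal]
        ring
      · intro k
        by_cases hk : k = i
        · subst hk; simp [hQdef, hij, hi0, hj.le]
        · by_cases hkj : k = j
          · subst hkj; simp [hQdef, Ne.symm hij, hk]
          · simp [hQdef, hk, hkj, hPnn k]
    have hsum : ∑ k, bstar k * Q k
        = (∑ k, bstar k * Pstar k) + bstar i * Pstar j - bstar j * Pstar j := by
      simp only [hQdef, mul_add, mul_sub, mul_ite, mul_zero,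
        Finset.sum_add_distrib, Finset.sum_sub_distrib,
        Finset.sum_ite_eq', Finset.mem_univ, if_pos]
    have hineq := hISO.2 Q hQfeas
    rw [hsum] at hineq
    have hjl := heq j hj
    nlinarith [hj]
  intro i
  exact ⟨⟨hlbb i, hub i⟩, heq i⟩
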